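/- Let X be a convex subset of a real normed vector space and let f_n : X → ℝ (n = 1,…,N) be differentiable functions that are each α-strongly convex on X, with ‖∇f_n(x)‖_* ≤ G₂ for all x ∈ X and all n. Let x₁ ∈ X and x_{n+1} ∈ argmin_{x∈X} Σ_{k=1}^n f_k(x) for n ≥ 1 (Follow-the-Leader). Then Σ_{n=1}^N f_n(x_n) ≤ inf_{x∈X} Σ_{n=1}^N f_n(x) + (G₂²/(2α)) Σ_{n=1}^N 1/n ≤ inf_{x∈X} Σ_{n=1}^N f_n(x) + (G₂²/(2α)) (ln N + 1). -/

import Mathlib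

set_option maxHeartbeats 2000000 in
theorem stmt_17
    {E : Type*} [NormedAddCommGroup E] [NormedSpace ℝ E]
    (X : Set E) (hX : Convex ℝ X)
    (N : ℕ) (hN : 1 ≤ N)
    (f : ℕ → E → ℝ) (Df : ℕ → E → (E →L[ℝ] ℝ))
    (α G₂ : ℝ) (hα : 0 < α) (hG₂ : 0 < G₂)
    (hgrad : ∀ n ∈ Finset.Icc 1 N, ∀ y ∈ X, HasFDerivWithinAt (f n) (Df n y) X y)
    (hsc : ∀ n ∈ Finset.Icc 1 N, ∀ y ∈ X, ∀ z ∈ X,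
      f n z ≥ f n y + Df n y (z - y) + α / 2 * ‖z - y‖ ^ 2)
    (hbound : ∀ n ∈ Finset.Icc 1 N, ∀ y ∈ X, ‖Df n y‖ ≤ G₂)
    (x : ℕ → E) (hmem : ∀ n, 1 ≤ n → x n ∈ X)
    (hftl : ∀ n, 1 ≤ n → ∀ y ∈ X,
      ∑ k ∈ Finset.Icc 1 n, f k (x (n + 1)) ≤ ∑ k ∈ Finset.Icc 1 n, f k y) :
    ∑ n ∈ Finset.Icc 1 N, f n (x n) ≤
        sInf ((fun y => ∑ n ∈ Finset.Icc 1 N, f n y) '' X) +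
          G₂ ^ 2 / (2 * α) * ∑ n ∈ Finset.Icc 1 N, (1 / (n : ℝ)) ∧
    sInf ((fun y => ∑ n ∈ Finset.Icc 1 N, f n y) '' X) +
        G₂ ^ 2 / (2 * α) * ∑ n ∈ Finset.Icc 1 N, (1 / (n : ℝ)) ≤
      sInf ((fun y => ∑ n ∈ Finset.Icc 1 N, f n y) '' X) +
        G₂ ^ 2 / (2 * α) * (Real.log N + 1) := by
  -- L2: per-step bound
  have L2 : ∀ t ∈ Finset.Icc 1 N,
      f t (x t) ≤ f t (x (t+1)) + G₂ * ‖x t - x (t+1)‖ - α/2 * ‖x t - x (t+1)‖^2 := by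
    intro t ht
    obtain ⟨ht1, htN⟩ := Finset.mem_Icc.mp ht
    have hxt : x t ∈ X := hmem t ht1
    have hxt1 : x (t+1) ∈ X := hmem (t+1) (by omega)
    have h := hsc t ht (x t) hxt (x (t+1)) hxt1
    have hb := hbound t ht (x t) hxt
    have hop := (Df t (x t)).le_opNorm (x (t+1) - x t)
    have h1 : |(Df t (x t)) (x (t+1) - x t)| ≤ G₂ * ‖x t - x (t+1)‖ := by
      rw [← Real.norm_eq_abs, norm_sub_rev (x t)]
      exact hop.trans (mul_le_mul_of_nonneg_right hb (norm_nonneg _))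
    rw [norm_sub_rev (x (t+1))] at h
    have h2 := abs_le.mp h1
    nlinarith [h2.1, h2.2]
  -- L1: strong convexity at the minimizer
  have L1 : ∀ m, 1 ≤ m → m ≤ N → ∀ y ∈ X,
      (∑ k ∈ Finset.Icc 1 m, f k (x (m+1))) + (m : ℝ) * α / 2 * ‖y - x (m+1)‖^2
        ≤ ∑ k ∈ Finset.Icc 1 m, f k y := by
    intro m hm1 hmN y hy
    set w := x (m+1) with hw
    have hwX : w ∈ X := hmem (m+1) (by omega)
    have hmin : ∀ z ∈ X, (∑ k ∈ Finset.Icc 1 m, f k w) ≤ ∑ k ∈ Finset.Icc 1 m, f k z :=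
      fun z hz => hftl m hm1 z hz
    set Q := ‖y - w‖^2 with hQ
    have hQ0 : (0:ℝ) ≤ Q := sq_nonneg _
    have key : ∀ l : ℝ, 0 < l → l ≤ 1 →
        (∑ k ∈ Finset.Icc 1 m, f k w) + (m : ℝ) * α / 2 * ((1 - l) * Q)
          ≤ ∑ k ∈ Finset.Icc 1 m, f k y := by
      intro l hl0 hl1
      set z := (1 - l) • w + l • y with hz
      have hzX : z ∈ X := hX hwX hy (by linarith) hl0.le (by ring)
      have hyz : y - z = (1 - l) • (y - w) := by rw [hz]; module
      have hwz : w - z = -(l • (y - w)) := by rw [hz]; module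
      have step : ∀ k ∈ Finset.Icc 1 m,
          f k z + α/2 * (l * (1 - l)) * Q ≤ l * f k y + (1 - l) * f k w := by
        intro k hk
        have hkN : k ∈ Finset.Icc 1 N := by
          simp only [Finset.mem_Icc] at hk ⊢; omega
        have h1 := hsc k hkN z hzX y hy
        have h2 := hsc k hkN z hzX w hwX
        rw [hyz, map_smul] at h1
        rw [hwz, map_neg, map_smul] at h2
        have n1 : ‖(1 - l) • (y - w)‖^2 = (1-l)^2 * Q := by
          rw [norm_smul, Real.norm_eq_abs, abs_of_nonneg (by linarith), mul_pow, hQ]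
        have n2 : ‖-(l • (y - w))‖^2 = l^2 * Q := by
          rw [norm_neg, norm_smul, Real.norm_eq_abs, abs_of_nonneg hl0.le, mul_pow, hQ]
        rw [n1] at h1
        rw [n2] at h2
        simp only [smul_eq_mul] at h1 h2
        nlinarith [h1, h2]
      have hsum := Finset.sum_le_sum step
      rw [Finset.sum_add_distrib, Finset.sum_add_distrib, Finset.sum_const,
        Nat.card_Icc, ← Finset.mul_sum, ← Finset.mul_sum] at hsum
      simp only [Nat.add_sub_cancel, nsmul_eq_mul] at hsum
      have hz2 := hmin z hzX
      have hmul : l * ((∑ k ∈ Finset.Icc 1 m, f k w) + (m : ℝ) * α / 2 * ((1 - l) * Q))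
          ≤ l * (∑ k ∈ Finset.Icc 1 m, f k y) := by nlinarith [hsum, hz2]
      exact le_of_mul_le_mul_left hmul hl0
    have C0 : (0:ℝ) ≤ (m : ℝ) * α / 2 * Q := by positivity
    refine le_of_forall_pos_le_add ?_
    intro ε hε
    set l := min 1 (ε / ((m : ℝ) * α / 2 * Q + 1)) with hldef
    have hl0 : 0 < l := lt_min one_pos (by positivity)
    have hl1 : l ≤ 1 := min_le_left _ _
    have h := key l hl0 hl1
    have hsmall : (m : ℝ) * α / 2 * Q - (m : ℝ) * α / 2 * ((1 - l) * Q) ≤ ε := by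
      have h1 : (m : ℝ) * α / 2 * Q - (m : ℝ) * α / 2 * ((1 - l) * Q)
          = l * ((m : ℝ) * α / 2 * Q) := by ring
      rw [h1]
      have h2 : l ≤ ε / ((m : ℝ) * α / 2 * Q + 1) := min_le_right _ _
      calc l * ((m : ℝ) * α / 2 * Q)
          ≤ (ε / ((m : ℝ) * α / 2 * Q + 1)) * ((m : ℝ) * α / 2 * Q) :=
            mul_le_mul_of_nonneg_right h2 C0
        _ ≤ ε := by
            rw [div_mul_eq_mul_div, div_le_iff₀ (by positivity)]
            nlinarith
    linarith
  -- main induction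
  have IND : ∀ m, 1 ≤ m → m ≤ N →
      (∑ t ∈ Finset.Icc 1 m, f t (x t)) ≤
        (∑ t ∈ Finset.Icc 1 m, f t (x (m+1)))
          + G₂^2/(2*α) * ∑ t ∈ Finset.Icc 1 m, (1/(t:ℝ)) := by
    intro m hm1
    induction m, hm1 using Nat.le_induction with
    | base =>
      intro h1N
      simp only [Finset.Icc_self, Finset.sum_singleton, Nat.cast_one]
      have hd := L2 1 (by simp [hN])
      set d := ‖x 1 - x 2‖ with hd'
      have hd0 : (0:ℝ) ≤ d := norm_nonneg _
      have hR : G₂^2/(2*α) * (1/1) * (2*α) = G₂^2 := by field_simp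
      have : G₂ * d - α/2 * d^2 ≤ G₂^2/(2*α) * (1/1) := by
        nlinarith [sq_nonneg (α * d - G₂), hR]
      linarith
    | succ m hm ih =>
      intro hmN
      have ihm := ih (by omega)
      rw [Finset.sum_Icc_succ_top (by omega : 1 ≤ m+1),
        Finset.sum_Icc_succ_top (by omega : 1 ≤ m+1),
        Finset.sum_Icc_succ_top (by omega : 1 ≤ m+1), mul_add]
      have hA := L1 m (by omega) (by omega) (x (m+2)) (hmem (m+2) (by omega))
      have hB := L2 (m+1) (by simp only [Finset.mem_Icc]; omega)
      set d := ‖x (m+1) - x (m+2)‖ with hd'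
      have hd0 : (0:ℝ) ≤ d := norm_nonneg _
      rw [norm_sub_rev (x (m+2))] at hA
      have hm2 : x (m+1+1) = x (m+2) := by norm_num
      rw [hm2] at hB
      have hcast : ((m+1 : ℕ) : ℝ) = (m : ℝ) + 1 := by push_cast; ring
      have hmpos : (0:ℝ) < (m : ℝ) + 1 := by positivity
      have quad : G₂ * d - α/2 * d^2 - (m : ℝ) * α / 2 * d^2
          ≤ G₂^2/(2*α) * (1/((m+1 : ℕ) : ℝ)) := by
        rw [hcast]
        have hR : G₂^2/(2*α) * (1/((m:ℝ)+1)) * (2*α*((m:ℝ)+1)) = G₂^2 := by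
          field_simp
        nlinarith [sq_nonneg (((m : ℝ) + 1) * α * d - G₂), mul_pos hmpos hα,
          mul_nonneg (mul_nonneg hmpos.le hα.le) (sq_nonneg d), hR]
      linarith
  -- assemble
  have hx1 : x 1 ∈ X := hmem 1 le_rfl
  have hne : ((fun y => ∑ n ∈ Finset.Icc 1 N, f n y) '' X).Nonempty :=
    ⟨_, Set.mem_image_of_mem _ hx1⟩
  have KEY : ∀ y ∈ X, (∑ n ∈ Finset.Icc 1 N, f n (x n)) ≤
      (∑ n ∈ Finset.Icc 1 N, f n y)
        + G₂^2/(2*α) * ∑ n ∈ Finset.Icc 1 N, (1/(n:ℝ)) := by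
    intro y hy
    have h1 := IND N hN le_rfl
    have h2 := hftl N hN y hy
    linarith
  constructor
  · have hlow : (∑ n ∈ Finset.Icc 1 N, f n (x n))
        - G₂^2/(2*α) * ∑ n ∈ Finset.Icc 1 N, (1/(n:ℝ))
        ≤ sInf ((fun y => ∑ n ∈ Finset.Icc 1 N, f n y) '' X) := by
      apply le_csInf hne
      rintro b ⟨y, hy, rfl⟩
      linarith [KEY y hy]
    linarith
  · have hh : ∑ n ∈ Finset.Icc 1 N, (1/(n:ℝ)) = (harmonic N : ℝ) := by
      rw [harmonic_eq_sum_Icc, Rat.cast_sum]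
      refine Finset.sum_congr rfl fun n _ => ?_
      push_cast
      rw [one_div]
    have hlog := harmonic_le_one_add_log N
    have hc : (0:ℝ) ≤ G₂^2/(2*α) := by positivity
    have hmul : G₂ ^ 2 / (2 * α) * ∑ n ∈ Finset.Icc 1 N, (1 / (n : ℝ))
        ≤ G₂ ^ 2 / (2 * α) * (Real.log N + 1) := by
      apply mul_le_mul_of_nonneg_left _ hc
      rw [hh]; linarith
    linarith
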